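/- arXiv:2010.11450 — 2 statements merged into one kernel-verified Lean document; each statement's English description precedes it below -/
import Mathlib

section
/- Let δ > 0 and d ≥ 1. The soft-max function PLSoftMax^δ is δ-approximate in the worst case: for every x ∈ ℝ^d and every i ∈ [d], if PLSoftMax^δ(x)_i > 0 then x_i ≥ max_j x_j − δ. -/
open Finset
open scoped Classical

/-- The soft-max matrix `SM_{(k,d)}` (1-indexed description): `m_{11} = (k−1)/k`;
`m_{ii} = 1/i` for `2 ≤ i ≤ k`; `m_{i1} = −1/k` for `2 ≤ i ≤ k`;
`m_{ij} = −1/(j(j−1))` for `1 ≤ i < j ≤ k`, `j ≥ 2`; all other entries `0`. -/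
noncomputable def SM (k d : ℕ) : Matrix (Fin d) (Fin d) ℝ :=
  Matrix.of fun i j =>
    if k < (i : ℕ) + 1 ∨ k < (j : ℕ) + 1 then 0
    else if (i : ℕ) + 1 = 1 ∧ (j : ℕ) + 1 = 1 then ((k : ℝ) - 1) / k
    else if (i : ℕ) = (j : ℕ) then 1 / ((i : ℕ) + 1 : ℝ)
    else if (j : ℕ) + 1 = 1 then -1 / (k : ℝ)
    else if (i : ℕ) < (j : ℕ) then
      -1 / ((((j : ℕ) + 1 : ℕ) : ℝ) * (((j : ℕ) + 1 : ℝ) - 1))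
    else 0

/-- The vector `u^{(k)} ∈ ℝ^d`, `u^{(k)}_i = 1/k` for the first `k` coordinates, else `0`. -/
noncomputable def uvec (k d : ℕ) : Fin d → ℝ :=
  fun i => if (i : ℕ) + 1 ≤ k then 1 / (k : ℝ) else 0

/-- The permutation matrix `P_π`, with `1`'s at entries `(i, π(i))`. -/
def permMat (d : ℕ) (π : Equiv.Perm (Fin d)) : Matrix (Fin d) (Fin d) ℝ :=
  Matrix.of fun i j => if j = π i then 1 else 0

/-- `π` is a sorting permutation for `x`, i.e. `x_{π(1)} ≥ x_{π(2)} ≥ ⋯ ≥ x_{π(d)}`. -/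
def Sorts {d : ℕ} (x : Fin d → ℝ) (π : Equiv.Perm (Fin d)) : Prop :=
  ∀ i j : Fin d, i ≤ j → x (π j) ≤ x (π i)

/-- `k_x`: the largest `k ∈ {1,…,d}` with `x_{π(1)} − x_{π(k)} ≤ δ`. -/
noncomputable def kx {d : ℕ} (δ : ℝ) (x : Fin d → ℝ) (π : Equiv.Perm (Fin d)) : ℕ :=
  sSup {k : ℕ | 1 ≤ k ∧ k ≤ d ∧
    ∃ h0 : 0 < d, ∃ h : k - 1 < d, x (π ⟨0, h0⟩) - x (π ⟨k - 1, h⟩) ≤ δ}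

/-- `PLSoftMax^δ(x) = (1/δ)·P_π⁻¹·SM_{(k_x,d)}·P_π·x + P_π⁻¹·u^{(k_x)}`,
computed using the sorting permutation `π` of `x`. -/
noncomputable def PLSoftMax {d : ℕ} (δ : ℝ) (x : Fin d → ℝ)
    (π : Equiv.Perm (Fin d)) : Fin d → ℝ :=
  (1 / δ) • ((permMat d π⁻¹).mulVec
      ((SM (kx δ x π) d).mulVec ((permMat d π).mulVec x)))
    + (permMat d π⁻¹).mulVec (uvec (kx δ x π) d)

lemma permMat_mulVec {d : ℕ} (σ : Equiv.Perm (Fin d)) (v : Fin d → ℝ) :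
    (permMat d σ).mulVec v = fun i => v (σ i) := by
  funext i
  simp [permMat, Matrix.mulVec, dotProduct, ite_mul, Finset.sum_ite_eq']

/-- `PLSoftMax^δ` is `δ`-approximate in the worst case: if a coordinate receives
positive probability, then its value is within `δ` of the maximum. -/
theorem plsoftmax_worst_case_approx (d : ℕ) (hd : 1 ≤ d) (δ : ℝ) (hδ : 0 < δ)
    (x : Fin d → ℝ) (π : Equiv.Perm (Fin d)) (hπ : Sorts x π) (i : Fin d)
    (hpos : 0 < PLSoftMax δ x π i) :
    x i ≥ (⨆ j, x j) - δ := by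
  have h0 : 0 < d := hd
  haveI : Nonempty (Fin d) := ⟨⟨0, h0⟩⟩
  set k := kx δ x π with hk
  set r := π⁻¹ i with hr
  have hval : PLSoftMax δ x π i
      = (1 / δ) * ((SM k d).mulVec (fun j => x (π j)) r) + uvec k d r := by
    simp only [PLSoftMax, Pi.add_apply, Pi.smul_apply, smul_eq_mul,
      permMat_mulVec, ← hk, ← hr]
  -- π⁻¹ i must be among the first k coordinates
  have hrk : (r : ℕ) + 1 ≤ k := by
    by_contra h
    push_neg at h
    have hz : (SM k d).mulVec (fun j => x (π j)) r = 0 := by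
      have : ∀ j, SM k d r j = 0 := by
        intro j
        simp [SM, Or.inl h, show ¬ (r : ℕ) < k by omega]
      simp [Matrix.mulVec, dotProduct, this]
    have hu : uvec k d r = 0 := by
      simp only [uvec, if_neg (by omega : ¬ (r : ℕ) + 1 ≤ k)]
    rw [hval, hz, hu] at hpos
    simp at hpos
  -- k belongs to the defining set
  have h1S : (1 : ℕ) ∈ {k : ℕ | 1 ≤ k ∧ k ≤ d ∧
      ∃ h0 : 0 < d, ∃ h : k - 1 < d, x (π ⟨0, h0⟩) - x (π ⟨k - 1, h⟩) ≤ δ} := by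
    refine ⟨le_refl 1, hd, h0, by simpa using h0, ?_⟩
    simp [le_of_lt hδ]
  have hkS : k ∈ {k : ℕ | 1 ≤ k ∧ k ≤ d ∧
      ∃ h0 : 0 < d, ∃ h : k - 1 < d, x (π ⟨0, h0⟩) - x (π ⟨k - 1, h⟩) ≤ δ} := by
    rw [hk, kx]
    exact Nat.sSup_mem ⟨1, h1S⟩ ⟨d, fun n hn => hn.2.1⟩
  obtain ⟨hk1, hkd, _, hkd', hkey⟩ := hkS
  have hsort1 : x (π ⟨k - 1, hkd'⟩) ≤ x (π r) := by
    apply hπ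
    rw [Fin.le_def]
    simp
    omega
  have hsup : (⨆ j, x j) ≤ x (π ⟨0, h0⟩) := by
    apply ciSup_le
    intro j
    have := hπ ⟨0, h0⟩ (π⁻¹ j) (by simp [Fin.le_def])
    simpa using this
  have hxi : x (π r) = x i := by rw [hr]; simp
  linarith
end

section
/- For any d ∈ ℕ, any k ∈ {1, …, d}, and any p, q ≥ 1 (possibly +∞), the (p, q)-subordinate norm of the soft-max matrix satisfies ‖SM_{(k,d)}‖_{p,q} ≤ 2 · min{p + 1, q/(q − 1), 1 + log k}, where q/(q−1) is interpreted as +∞ when q = 1, p + 1 is interpreted as +∞ when p = ∞, and log denotes the natural logarithm. -/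
open Finset
open scoped ENNReal

/-- The `ℓ_p` norm for an extended exponent `p ∈ [1, ∞]`. -/
noncomputable def pnormE {d : ℕ} (p : ℝ≥0∞) (z : Fin d → ℝ) : ℝ :=
  if p = ∞ then ⨆ i, |z i| else (∑ i, |z i| ^ p.toReal) ^ (1 / p.toReal)

/-- `q/(q−1)`, interpreted as `+∞` when `q = 1` and as `1` when `q = ∞`. -/
noncomputable def qConj (q : ℝ≥0∞) : ℝ≥0∞ :=
  if q = ∞ then 1 else q / (q - 1)

/-- The `(p, q)`-subordinate norm `‖A‖_{p,q} = sup_{x ≠ 0} ‖Ax‖_q / ‖x‖_p` for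
extended exponents. -/
noncomputable def subNormE {d : ℕ} (p q : ℝ≥0∞) (A : Matrix (Fin d) (Fin d) ℝ) : ℝ :=
  sSup {r : ℝ | ∃ x : Fin d → ℝ, x ≠ 0 ∧ r = pnormE q (A.mulVec x) / pnormE p x}


lemma tele {a : ℕ} (ha : 1 ≤ a) : ∀ b, a ≤ b →
    ∑ j ∈ Finset.Ico a b, (1:ℝ)/(j*(j+1)) ≤ 1/a - 1/b := by
  intro b hb
  induction b, hb using Nat.le_induction with
  | base => simp
  | succ b hb ih =>
    rw [Finset.sum_Ico_succ_top hb]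
    have hb1 : (1:ℝ) ≤ (b:ℝ) := by exact_mod_cast ha.trans hb
    have h1 : (1:ℝ)/(b*(b+1)) = 1/b - 1/(b+1) := by field_simp; ring
    push_cast
    push_cast at ih
    linarith

lemma harmonic_le (k : ℕ) (hk : 1 ≤ k) :
    ∑ m ∈ Finset.range k, (1:ℝ)/(m+1) ≤ 1 + Real.log k := by
  induction k, hk using Nat.le_induction with
  | base => simp
  | succ k hk ih =>
    rw [Finset.sum_range_succ]
    have hk1 : (1:ℝ) ≤ (k:ℝ) := by exact_mod_cast hk
    have hpos : (0:ℝ) < (k:ℝ)/(k+1) := by positivity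
    have hlog : Real.log ((k:ℝ)/((k:ℝ)+1)) ≤ (k:ℝ)/((k:ℝ)+1) - 1 :=
      Real.log_le_sub_one_of_pos hpos
    have hld : Real.log ((k:ℝ)/((k:ℝ)+1)) = Real.log k - Real.log ((k:ℝ)+1) := by
      rw [Real.log_div (by linarith) (by linarith)]
    have h2 : (k:ℝ)/((k:ℝ)+1) - 1 = -(1/((k:ℝ)+1)) := by field_simp; ring
    push_cast
    linarith

lemma zeta_step {s : ℝ} (hs : 0 < s) {n : ℕ} (hn : 1 ≤ n) :
    s * ((n:ℝ)+1) ^ (-(s+1)) ≤ (n:ℝ) ^ (-s) - ((n:ℝ)+1) ^ (-s) := by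
  have hn1 : (1:ℝ) ≤ (n:ℝ) := by exact_mod_cast hn
  have hNpos : (0:ℝ) < (n:ℝ) := by linarith
  have hN1pos : (0:ℝ) < (n:ℝ)+1 := by linarith
  set t : ℝ := ((n:ℝ)+1)/(n:ℝ) with ht
  have htpos : 0 < t := by positivity
  have hlog : 1 - 1/t ≤ Real.log t := by
    have := Real.log_le_sub_one_of_pos (x := 1/t) (by positivity)
    have hlt : Real.log (1/t) = - Real.log t := by rw [one_div, Real.log_inv]
    linarith
  have hexp : 1 + s * Real.log t ≤ t ^ s := by
    calc 1 + s * Real.log t = Real.log t * s + 1 := by ring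
    _ ≤ Real.exp (Real.log t * s) := Real.add_one_le_exp _
    _ = t ^ s := (Real.rpow_def_of_pos htpos s).symm
  have hts : 1 + s * (1 - 1/t) ≤ t ^ s := by
    nlinarith [mul_le_mul_of_nonneg_left hlog hs.le]
  have h1t : 1 - 1/t = 1/((n:ℝ)+1) := by rw [ht]; field_simp; ring
  have hmul : ((n:ℝ)+1) ^ (-s) * t ^ s = (n:ℝ) ^ (-s) := by
    rw [ht, Real.div_rpow hN1pos.le hNpos.le, Real.rpow_neg hN1pos.le, Real.rpow_neg hNpos.le]
    field_simp
  have hpow_pos : (0:ℝ) < ((n:ℝ)+1) ^ (-s) := Real.rpow_pos_of_pos hN1pos _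
  have key : ((n:ℝ)+1) ^ (-s) * (1 + s * (1/((n:ℝ)+1))) ≤ (n:ℝ) ^ (-s) := by
    rw [← hmul]
    apply mul_le_mul_of_nonneg_left _ hpow_pos.le
    rw [← h1t]; exact hts
  have hsplit : ((n:ℝ)+1) ^ (-(s+1)) = ((n:ℝ)+1) ^ (-s) * (1/((n:ℝ)+1)) := by
    rw [one_div, ← Real.rpow_neg_one ((n:ℝ)+1), ← Real.rpow_add hN1pos]
    ring_nf
  rw [hsplit]
  nlinarith [hpow_pos]

lemma zeta_bound {r : ℝ} (hr : 1 < r) (n : ℕ) :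
    ∑ m ∈ Finset.range n, (1/((m:ℝ)+1)) ^ r ≤ r/(r-1) := by
  have hs : 0 < r - 1 := by linarith
  have main : ∀ n : ℕ, 1 ≤ n → ∑ m ∈ Finset.range n, (1/((m:ℝ)+1)) ^ r
      ≤ 1 + (1 - ((n:ℝ)) ^ (-(r-1)))/(r-1) := by
    intro n hn
    induction n, hn using Nat.le_induction with
    | base => simp [Real.one_rpow]
    | succ n hn ih =>
      rw [Finset.sum_range_succ]
      have hn1 : (1:ℝ) ≤ (n:ℝ) := by exact_mod_cast hn
      have hN1pos : (0:ℝ) < (n:ℝ)+1 := by linarith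
      have hstep := zeta_step hs hn
      have hrr : r - 1 + 1 = r := by ring
      rw [hrr] at hstep
      have hterm : (1/((n:ℝ)+1)) ^ r = ((n:ℝ)+1) ^ (-r) := by
        rw [one_div, Real.inv_rpow hN1pos.le, ← Real.rpow_neg hN1pos.le]
      have hdiv : ((n:ℝ)+1) ^ (-r) ≤ ((n:ℝ) ^ (-(r-1)) - ((n:ℝ)+1) ^ (-(r-1)))/(r-1) := by
        rw [le_div_iff₀ hs]
        linarith
      have hsplit2 : (1 - ((n:ℝ)+1) ^ (-(r-1)))/(r-1)
          = (1 - ((n:ℝ)) ^ (-(r-1)))/(r-1)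
            + (((n:ℝ)) ^ (-(r-1)) - ((n:ℝ)+1) ^ (-(r-1)))/(r-1) := by ring
      push_cast
      linarith
  rcases Nat.eq_zero_or_pos n with h0 | h1
  · subst h0; simp; positivity
  · have h := main n h1
    have hnn : (0:ℝ) ≤ ((n:ℝ)) ^ (-(r-1)) := Real.rpow_nonneg (by positivity) _
    have h2 : (1 - ((n:ℝ)) ^ (-(r-1)))/(r-1) ≤ 1/(r-1) := by
      gcongr
      linarith
    have e : (1:ℝ) + 1/(r-1) = r/(r-1) := by field_simp; ring
    linarith

noncomputable def Ent (k a b : ℕ) : ℝ :=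
  if k < a + 1 ∨ k < b + 1 then 0
  else if a + 1 = 1 ∧ b + 1 = 1 then ((k : ℝ) - 1) / k
  else if a = b then 1 / ((a : ℕ) + 1 : ℝ)
  else if b + 1 = 1 then -1 / (k : ℝ)
  else if a < b then -1 / (((b + 1 : ℕ) : ℝ) * (((b : ℕ) + 1 : ℝ) - 1))
  else 0

lemma SM_apply (k d : ℕ) (i j : Fin d) : SM k d i j = Ent k i j := rfl

-- explicit values
lemma Ent_zero_of_k_le_left {k a : ℕ} (h : k ≤ a) (b : ℕ) : Ent k a b = 0 := by
  simp [Ent, Nat.lt_succ_of_le h]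

lemma Ent_zero_of_k_le_right {k b : ℕ} (h : k ≤ b) (a : ℕ) : Ent k a b = 0 := by
  have : k < b + 1 := Nat.lt_succ_of_le h
  simp [Ent, this]

lemma abs_Ent_offdiag {k a b : ℕ} (hab : a < b) (hbk : b < k) :
    |Ent k a b| = 1/((b:ℝ)*((b:ℝ)+1)) := by
  have hb1 : 1 ≤ b := Nat.one_le_iff_ne_zero.mpr (by omega)
  have hb1' : (1:ℝ) ≤ (b:ℝ) := by exact_mod_cast hb1
  have : Ent k a b = -1 / (((b + 1 : ℕ) : ℝ) * (((b : ℕ) + 1 : ℝ) - 1)) := by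
    simp only [Ent]
    rw [if_neg (by omega), if_neg (by omega), if_neg (by omega), if_neg (by omega),
      if_pos hab]
  rw [this]
  push_cast
  rw [abs_div, abs_neg, abs_one]
  rw [abs_of_pos (by nlinarith)]
  ring_nf

lemma abs_Ent_diag {k a : ℕ} (ha1 : 1 ≤ a) (hak : a < k) :
    |Ent k a a| = 1/((a:ℝ)+1) := by
  have : Ent k a a = 1 / ((a:ℝ) + 1) := by
    simp only [Ent]
    rw [if_neg (by omega), if_neg (by omega)]
    simp
  rw [this, abs_of_pos (by positivity)]

lemma abs_Ent_col0 {k a : ℕ} (ha1 : 1 ≤ a) (hak : a < k) :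
    |Ent k a 0| = 1/(k:ℝ) := by
  have hk : (0:ℝ) < k := by
    have h0 : 0 < k := by omega
    exact_mod_cast h0
  have : Ent k a 0 = -1 / (k:ℝ) := by
    simp only [Ent]
    rw [if_neg (by omega), if_neg (by omega), if_neg (by omega)]
    simp
  rw [this, abs_div, abs_neg, abs_one, abs_of_pos hk]

lemma Ent_zero_lower {k a b : ℕ} (hb1 : 1 ≤ b) (hba : b < a) : Ent k a b = 0 := by
  by_cases h : k < a + 1 ∨ k < b + 1
  · simp only [Ent]; rw [if_pos h]
  · simp only [Ent]
    rw [if_neg h, if_neg (by omega), if_neg (by omega), if_neg (by omega), if_neg (by omega)]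

lemma abs_Ent_00 {k : ℕ} (hk : 1 ≤ k) : |Ent k 0 0| = ((k:ℝ)-1)/k := by
  have hk1 : (1:ℝ) ≤ (k:ℝ) := by exact_mod_cast hk
  have : Ent k 0 0 = ((k:ℝ)-1)/k := by
    simp only [Ent]
    rw [if_neg (by omega), if_pos (by norm_num)]
  rw [this, abs_of_nonneg (div_nonneg (by linarith) (by linarith))]


lemma row_sum_le (k d : ℕ) (hk1 : 1 ≤ k) (hkd : k ≤ d) (i : Fin d) :
    ∑ j, |SM k d i j| ≤ 2/((i:ℕ)+1) := by
  set a := (i:ℕ) with ha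
  have hconv : ∑ j, |SM k d i j| = ∑ b ∈ Finset.range d, |Ent k a b| := by
    rw [← Fin.sum_univ_eq_sum_range (fun b => |Ent k a b|) d]
    rfl
  rw [hconv]
  have hapos : (0:ℝ) < (a:ℝ) + 1 := by positivity
  by_cases hak : k ≤ a
  · have : ∑ b ∈ Finset.range d, |Ent k a b| = 0 :=
      Finset.sum_eq_zero fun b _ => by rw [Ent_zero_of_k_le_left hak, abs_zero]
    rw [this]; positivity
  push_neg at hak
  have hsplit : ∑ b ∈ Finset.range d, |Ent k a b|
      = ∑ b ∈ Finset.Ico 0 k, |Ent k a b| + ∑ b ∈ Finset.Ico k d, |Ent k a b| := by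
    rw [Finset.range_eq_Ico, ← Finset.sum_Ico_consecutive _ (Nat.zero_le k) hkd]
  have htail : ∑ b ∈ Finset.Ico k d, |Ent k a b| = 0 :=
    Finset.sum_eq_zero fun b hb => by
      rw [Ent_zero_of_k_le_right (Finset.mem_Ico.mp hb).1, abs_zero]
  have hbot : ∑ b ∈ Finset.Ico 0 k, |Ent k a b|
      = |Ent k a 0| + ∑ b ∈ Finset.Ico 1 k, |Ent k a b| := by
    rw [Finset.sum_eq_sum_Ico_succ_bot (by omega : 0 < k)]
  rw [hsplit, htail, hbot]
  have hk1' : (1:ℝ) ≤ (k:ℝ) := by exact_mod_cast hk1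
  rcases Nat.eq_zero_or_pos a with ha0 | ha1
  · rw [ha0]
    have h00 := abs_Ent_00 hk1
    have hoff : ∑ b ∈ Finset.Ico 1 k, |Ent k 0 b| = ∑ b ∈ Finset.Ico 1 k, (1:ℝ)/(b*(b+1)) :=
      Finset.sum_congr rfl fun b hb => by
        have hb' := Finset.mem_Ico.mp hb
        exact abs_Ent_offdiag (by omega) hb'.2
    have htel := tele (le_refl 1) k hk1
    rw [h00, hoff]
    push_cast at htel
    have hkinv : (0:ℝ) < 1/(k:ℝ) := by positivity
    have hg : (2:ℝ)/(((0:ℕ):ℝ)+1) = 2 := by norm_num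
    rw [hg]
    have hkk : ((k:ℝ)-1)/k = 1 - 1/k := by field_simp
    linarith
  · have h0 := abs_Ent_col0 ha1 hak
    have hmid : ∑ b ∈ Finset.Ico 1 k, |Ent k a b|
        = ∑ b ∈ Finset.Ico 1 (a+1), |Ent k a b| + ∑ b ∈ Finset.Ico (a+1) k, |Ent k a b| := by
      rw [Finset.sum_Ico_consecutive _ (by omega) (by omega)]
    have htop : ∑ b ∈ Finset.Ico 1 (a+1), |Ent k a b|
        = ∑ b ∈ Finset.Ico 1 a, |Ent k a b| + |Ent k a a| := by
      rw [Finset.sum_Ico_succ_top (by omega)]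
    have hlow : ∑ b ∈ Finset.Ico 1 a, |Ent k a b| = 0 :=
      Finset.sum_eq_zero fun b hb => by
        have hb' := Finset.mem_Ico.mp hb
        rw [Ent_zero_lower hb'.1 hb'.2, abs_zero]
    have hdiag := abs_Ent_diag ha1 hak
    have hoff : ∑ b ∈ Finset.Ico (a+1) k, |Ent k a b|
        = ∑ b ∈ Finset.Ico (a+1) k, (1:ℝ)/(b*(b+1)) :=
      Finset.sum_congr rfl fun b hb => by
        have hb' := Finset.mem_Ico.mp hb
        exact abs_Ent_offdiag (by omega) hb'.2
    have htel := tele (a := a+1) (by omega) k (by omega)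
    rw [h0, hmid, htop, hlow, hdiag, hoff]
    push_cast at htel
    have h2 : (2:ℝ)/((a:ℝ)+1) = 1/((a:ℝ)+1) + 1/((a:ℝ)+1) := by ring
    rw [h2]
    linarith

lemma col_sum_le (k d : ℕ) (hk1 : 1 ≤ k) (hkd : k ≤ d) (j : Fin d) :
    ∑ i, |SM k d i j| ≤ 2/((j:ℕ)+1) := by
  set b := (j:ℕ) with hb
  have hconv : ∑ i, |SM k d i j| = ∑ a ∈ Finset.range d, |Ent k a b| := by
    rw [← Fin.sum_univ_eq_sum_range (fun a => |Ent k a b|) d]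
    rfl
  rw [hconv]
  have hbpos : (0:ℝ) < (b:ℝ) + 1 := by positivity
  by_cases hbk : k ≤ b
  · have : ∑ a ∈ Finset.range d, |Ent k a b| = 0 :=
      Finset.sum_eq_zero fun a _ => by rw [Ent_zero_of_k_le_right hbk, abs_zero]
    rw [this]; positivity
  push_neg at hbk
  have hsplit : ∑ a ∈ Finset.range d, |Ent k a b|
      = ∑ a ∈ Finset.Ico 0 k, |Ent k a b| + ∑ a ∈ Finset.Ico k d, |Ent k a b| := by
    rw [Finset.range_eq_Ico, ← Finset.sum_Ico_consecutive _ (Nat.zero_le k) hkd]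
  have htail : ∑ a ∈ Finset.Ico k d, |Ent k a b| = 0 :=
    Finset.sum_eq_zero fun a ha => by
      rw [Ent_zero_of_k_le_left (Finset.mem_Ico.mp ha).1, abs_zero]
  rw [hsplit, htail, add_zero]
  have hk1' : (1:ℝ) ≤ (k:ℝ) := by exact_mod_cast hk1
  rcases Nat.eq_zero_or_pos b with hb0 | hb1
  · rw [hb0]
    have hbot : ∑ a ∈ Finset.Ico 0 k, |Ent k a 0|
        = |Ent k 0 0| + ∑ a ∈ Finset.Ico 1 k, |Ent k a 0| := by
      rw [Finset.sum_eq_sum_Ico_succ_bot (by omega : 0 < k)]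
    have hconst : ∑ a ∈ Finset.Ico 1 k, |Ent k a 0| = ((k:ℝ)-1) * (1/(k:ℝ)) := by
      rw [Finset.sum_congr rfl fun a ha => by
        have ha' := Finset.mem_Ico.mp ha
        exact abs_Ent_col0 ha'.1 ha'.2]
      rw [Finset.sum_const, Nat.card_Ico, nsmul_eq_mul]
      congr 1
      push_cast [Nat.cast_sub hk1]
      ring
    rw [hbot, hconst, abs_Ent_00 hk1]
    have hkpos : (0:ℝ) < (k:ℝ) := by linarith
    have e : ((k:ℝ)-1)/k + ((k:ℝ)-1)*(1/k) = 2 - 2/k := by field_simp; ring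
    have h2 : (0:ℝ) < 2/(k:ℝ) := by positivity
    have hg : (2:ℝ)/(((0:ℕ):ℝ)+1) = 2 := by norm_num
    rw [hg]
    linarith
  · have hsplit2 : ∑ a ∈ Finset.Ico 0 k, |Ent k a b|
        = ∑ a ∈ Finset.Ico 0 b, |Ent k a b| + ∑ a ∈ Finset.Ico b k, |Ent k a b| := by
      rw [Finset.sum_Ico_consecutive _ (Nat.zero_le b) (by omega)]
    have hbot2 : ∑ a ∈ Finset.Ico b k, |Ent k a b|
        = |Ent k b b| + ∑ a ∈ Finset.Ico (b+1) k, |Ent k a b| := by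
      rw [Finset.sum_eq_sum_Ico_succ_bot (by omega : b < k)]
    have hup : ∑ a ∈ Finset.Ico (b+1) k, |Ent k a b| = 0 :=
      Finset.sum_eq_zero fun a ha => by
        have ha' := Finset.mem_Ico.mp ha
        rw [Ent_zero_lower hb1 (by omega), abs_zero]
    have hb1' : (1:ℝ) ≤ (b:ℝ) := by exact_mod_cast hb1
    have hlowconst : ∑ a ∈ Finset.Ico 0 b, |Ent k a b| = (b:ℝ) * (1/((b:ℝ)*((b:ℝ)+1))) := by
      rw [Finset.sum_congr rfl fun a ha => by
        have ha' := Finset.mem_Ico.mp ha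
        exact abs_Ent_offdiag ha'.2 hbk]
      rw [Finset.sum_const, Nat.card_Ico, nsmul_eq_mul]
      norm_num
    rw [hsplit2, hbot2, hup, hlowconst, abs_Ent_diag hb1 hbk]
    have : (b:ℝ) * (1/((b:ℝ)*((b:ℝ)+1))) = 1/((b:ℝ)+1) := by
      field_simp
    rw [this]
    have h2 : (2:ℝ)/((b:ℝ)+1) = 1/((b:ℝ)+1) + 1/((b:ℝ)+1) := by ring
    rw [h2]
    linarith

lemma pnormE_nonneg {d : ℕ} (p : ℝ≥0∞) (z : Fin d → ℝ) : 0 ≤ pnormE p z := by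
  unfold pnormE
  split_ifs with h
  · exact Real.iSup_nonneg fun i => abs_nonneg _
  · exact Real.rpow_nonneg (Finset.sum_nonneg fun i _ => Real.rpow_nonneg (abs_nonneg _) _) _

lemma one_le_toReal {p : ℝ≥0∞} (hp : 1 ≤ p) (h : p ≠ ∞) : 1 ≤ p.toReal := by
  rw [← ENNReal.toReal_one]
  exact ENNReal.toReal_mono h hp

lemma abs_le_pnormE {d : ℕ} {p : ℝ≥0∞} (hp : 1 ≤ p) (z : Fin d → ℝ) (i : Fin d) :
    |z i| ≤ pnormE p z := by
  unfold pnormE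
  split_ifs with h
  · exact le_ciSup (f := fun j => |z j|) (Set.Finite.bddAbove (Set.finite_range _)) i
  · have hr : 1 ≤ p.toReal := one_le_toReal hp h
    have hr0 : p.toReal ≠ 0 := by linarith
    have h1 : |z i| = (|z i| ^ p.toReal) ^ (1/p.toReal) := by
      rw [one_div, Real.rpow_rpow_inv (abs_nonneg _) hr0]
    rw [h1]
    apply Real.rpow_le_rpow (Real.rpow_nonneg (abs_nonneg _) _) _ (by positivity)
    exact Finset.single_le_sum (fun j _ => Real.rpow_nonneg (abs_nonneg _) _) (Finset.mem_univ i)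

lemma pnormE_pos {d : ℕ} {p : ℝ≥0∞} (hp : 1 ≤ p) {z : Fin d → ℝ} (hz : z ≠ 0) :
    0 < pnormE p z := by
  obtain ⟨i, hi⟩ := Function.ne_iff.mp hz
  have : (0:ℝ) < |z i| := abs_pos.mpr hi
  exact lt_of_lt_of_le this (abs_le_pnormE hp z i)

lemma sum_rpow_le_rpow_sum {d : ℕ} {r : ℝ} (hr : 1 ≤ r) (z : Fin d → ℝ) :
    ∑ i, |z i| ^ r ≤ (∑ i, |z i|) ^ r := by
  set S := ∑ i, |z i| with hS
  have hS0 : 0 ≤ S := Finset.sum_nonneg fun i _ => abs_nonneg _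
  have hterm : ∀ i : Fin d, |z i| ^ r ≤ S ^ (r-1) * |z i| := by
    intro i
    have hle : |z i| ≤ S :=
      Finset.single_le_sum (fun j _ => abs_nonneg (z j)) (Finset.mem_univ i)
    rcases eq_or_lt_of_le (abs_nonneg (z i)) with h0 | hpos
    · rw [← h0, Real.zero_rpow (by linarith), mul_zero]
    · have hadd := Real.rpow_add hpos (r-1) 1
      rw [Real.rpow_one] at hadd
      have hr1 : r - 1 + 1 = r := by ring
      rw [hr1] at hadd
      rw [hadd]
      exact mul_le_mul_of_nonneg_right
        (Real.rpow_le_rpow (abs_nonneg _) hle (by linarith)) (abs_nonneg _)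
  calc ∑ i, |z i| ^ r ≤ ∑ i : Fin d, S ^ (r-1) * |z i| :=
        Finset.sum_le_sum fun i _ => hterm i
    _ = S ^ (r-1) * S := by rw [← Finset.mul_sum]
    _ ≤ S ^ r := by
        rcases eq_or_lt_of_le hS0 with h0 | hpos
        · rw [← h0, mul_zero]
          exact Real.rpow_nonneg le_rfl r
        · have hadd := Real.rpow_add hpos (r-1) 1
          rw [Real.rpow_one] at hadd
          have hr1 : r - 1 + 1 = r := by ring
          rw [hr1] at hadd
          rw [← hadd]

lemma pnormE_le_sum {d : ℕ} {q : ℝ≥0∞} (hq : 1 ≤ q) (z : Fin d → ℝ) :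
    pnormE q z ≤ ∑ i, |z i| := by
  have hsum0 : 0 ≤ ∑ i, |z i| := Finset.sum_nonneg fun i _ => abs_nonneg _
  unfold pnormE
  split_ifs with h
  · rcases isEmpty_or_nonempty (Fin d) with hE | hN
    · rw [Real.iSup_of_isEmpty]
      exact hsum0
    · exact ciSup_le fun i =>
        Finset.single_le_sum (fun j _ => abs_nonneg (z j)) (Finset.mem_univ i)
  · have hr : 1 ≤ q.toReal := one_le_toReal hq h
    have hr0 : q.toReal ≠ 0 := by linarith
    calc (∑ i, |z i| ^ q.toReal) ^ (1/q.toReal)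
        ≤ ((∑ i, |z i|) ^ q.toReal) ^ (1/q.toReal) :=
          Real.rpow_le_rpow
            (Finset.sum_nonneg fun i _ => Real.rpow_nonneg (abs_nonneg _) _)
            (sum_rpow_le_rpow_sum hr z) (by positivity)
      _ = ∑ i, |z i| := by rw [one_div, Real.rpow_rpow_inv hsum0 hr0]

lemma subNormE_le {d : ℕ} {p q : ℝ≥0∞} (hp : 1 ≤ p) {A : Matrix (Fin d) (Fin d) ℝ} {C : ℝ}
    (hC : 0 ≤ C) (h : ∀ x : Fin d → ℝ, pnormE q (A.mulVec x) ≤ C * pnormE p x) :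
    subNormE p q A ≤ C := by
  apply Real.sSup_le _ hC
  rintro r ⟨x, hx, rfl⟩
  have hpos := pnormE_pos hp hx
  rw [div_le_iff₀ hpos]
  exact h x

lemma mv_abs_le {d k : ℕ} (hk1 : 1 ≤ k) (hkd : k ≤ d) {p : ℝ≥0∞} (hp : 1 ≤ p)
    (x : Fin d → ℝ) (i : Fin d) :
    |(SM k d).mulVec x i| ≤ (2/((i:ℕ)+1)) * pnormE p x := by
  have hM : 0 ≤ pnormE p x := pnormE_nonneg _ _
  have hmv : (SM k d).mulVec x i = ∑ j, SM k d i j * x j := by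
    simp [Matrix.mulVec, dotProduct]
  rw [hmv]
  calc |∑ j, SM k d i j * x j| ≤ ∑ j, |SM k d i j * x j| :=
        Finset.abs_sum_le_sum_abs _ _
    _ ≤ ∑ j, |SM k d i j| * pnormE p x := by
        apply Finset.sum_le_sum
        intro j _
        rw [abs_mul]
        exact mul_le_mul_of_nonneg_left (abs_le_pnormE hp x j) (abs_nonneg _)
    _ = (∑ j, |SM k d i j|) * pnormE p x := by rw [Finset.sum_mul]
    _ ≤ (2/((i:ℕ)+1)) * pnormE p x :=
        mul_le_mul_of_nonneg_right (row_sum_le k d hk1 hkd i) hM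

lemma mv_zero {d k : ℕ} (x : Fin d → ℝ) (i : Fin d) (h : k ≤ (i:ℕ)) :
    (SM k d).mulVec x i = 0 := by
  have hz : ∀ j : Fin d, SM k d i j = 0 := fun j => by
    rw [SM_apply]; exact Ent_zero_of_k_le_left h _
  simp [Matrix.mulVec, dotProduct, hz]

lemma master_log {d k : ℕ} (hk1 : 1 ≤ k) (hkd : k ≤ d) {p q : ℝ≥0∞}
    (hp : 1 ≤ p) (hq : 1 ≤ q) (x : Fin d → ℝ) :
    pnormE q ((SM k d).mulVec x) ≤ (2*(1+Real.log k)) * pnormE p x := by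
  set M := pnormE p x with hMdef
  have hM0 : 0 ≤ M := pnormE_nonneg _ _
  have h1 : pnormE q ((SM k d).mulVec x) ≤ ∑ i, |(SM k d).mulVec x i| :=
    pnormE_le_sum hq _
  have h2 : ∑ i, |(SM k d).mulVec x i|
      ≤ ∑ i : Fin d, (if (i:ℕ) < k then (2/(((i:ℕ):ℝ)+1)) * M else 0) := by
    apply Finset.sum_le_sum
    intro i _
    by_cases hik : (i:ℕ) < k
    · rw [if_pos hik]; exact mv_abs_le hk1 hkd hp x i
    · rw [if_neg hik, mv_zero x i (le_of_not_gt hik), abs_zero]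
  have h3 : ∑ i : Fin d, (if (i:ℕ) < k then (2/(((i:ℕ):ℝ)+1)) * M else 0)
      = ∑ m ∈ Finset.range d, (if m < k then (2/((m:ℝ)+1)) * M else 0) :=
    Fin.sum_univ_eq_sum_range (fun m => if m < k then (2/((m:ℝ)+1)) * M else 0) d
  have h4 : ∑ m ∈ Finset.range d, (if m < k then (2/((m:ℝ)+1)) * M else 0)
      = ∑ m ∈ Finset.range k, (2/((m:ℝ)+1)) * M := by
    rw [← Finset.sum_subset (Finset.range_subset_range.mpr hkd)
        (fun m _ hm => if_neg (fun h => hm (Finset.mem_range.mpr h)))]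
    exact Finset.sum_congr rfl fun m hm => if_pos (Finset.mem_range.mp hm)
  have h5 : ∑ m ∈ Finset.range k, (2/((m:ℝ)+1)) * M ≤ (2*(1+Real.log k)) * M := by
    have hh := harmonic_le k hk1
    have he : ∑ m ∈ Finset.range k, (2/((m:ℝ)+1)) * M
        = (∑ m ∈ Finset.range k, (1:ℝ)/(m+1)) * (2*M) := by
      rw [Finset.sum_mul]
      exact Finset.sum_congr rfl fun m _ => by ring
    rw [he]
    calc (∑ m ∈ Finset.range k, (1:ℝ)/(m+1)) * (2*M)
        ≤ (1+Real.log k) * (2*M) := mul_le_mul_of_nonneg_right hh (by positivity)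
      _ = (2*(1+Real.log k)) * M := by ring
  linarith

lemma master_qtop {d k : ℕ} (hk1 : 1 ≤ k) (hkd : k ≤ d) {p : ℝ≥0∞} (hp : 1 ≤ p)
    (x : Fin d → ℝ) :
    pnormE ∞ ((SM k d).mulVec x) ≤ 2 * pnormE p x := by
  have hd : 0 < d := lt_of_lt_of_le hk1 hkd
  haveI : Nonempty (Fin d) := ⟨⟨0, hd⟩⟩
  have hM0 : 0 ≤ pnormE p x := pnormE_nonneg _ _
  rw [pnormE, if_pos rfl]
  apply ciSup_le
  intro i
  calc |(SM k d).mulVec x i| ≤ (2/(((i:ℕ):ℝ)+1)) * pnormE p x := mv_abs_le hk1 hkd hp x i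
    _ ≤ 2 * pnormE p x := by
        apply mul_le_mul_of_nonneg_right _ hM0
        exact div_le_self (by norm_num) (le_add_of_nonneg_left (Nat.cast_nonneg _))

lemma master_q {d k : ℕ} (hk1 : 1 ≤ k) (hkd : k ≤ d) {p q : ℝ≥0∞} (hp : 1 ≤ p)
    (hqt : q ≠ ∞) (hq1 : 1 < q.toReal) (x : Fin d → ℝ) :
    pnormE q ((SM k d).mulVec x)
      ≤ (2 * (q.toReal/(q.toReal - 1))) * pnormE p x := by
  set r := q.toReal with hrdef
  set M := pnormE p x with hMdef
  have hM0 : 0 ≤ M := pnormE_nonneg _ _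
  set c := r/(r-1) with hcdef
  have hrm1 : 0 < r - 1 := by linarith
  have hc1 : 1 ≤ c := by
    rw [hcdef, le_div_iff₀ hrm1]; linarith
  set z := (SM k d).mulVec x with hzdef
  rw [pnormE, if_neg hqt]
  have hA : ∀ i : Fin d, |z i| ^ r ≤ (2*M)^r * (1/(((i:ℕ):ℝ)+1))^r := by
    intro i
    have h1 : |z i| ≤ (2*M) * (1/(((i:ℕ):ℝ)+1)) := by
      have := mv_abs_le hk1 hkd hp x i
      calc |z i| ≤ (2/(((i:ℕ):ℝ)+1)) * M := this
        _ = (2*M) * (1/(((i:ℕ):ℝ)+1)) := by ring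
    calc |z i| ^ r ≤ ((2*M) * (1/(((i:ℕ):ℝ)+1))) ^ r :=
          Real.rpow_le_rpow (abs_nonneg _) h1 (by linarith)
      _ = (2*M)^r * (1/(((i:ℕ):ℝ)+1))^r :=
          Real.mul_rpow (by positivity) (by positivity)
  have hsum : ∑ i, |z i| ^ r ≤ (2*M)^r * c := by
    calc ∑ i, |z i| ^ r ≤ ∑ i : Fin d, (2*M)^r * (1/(((i:ℕ):ℝ)+1))^r :=
          Finset.sum_le_sum fun i _ => hA i
      _ = ∑ m ∈ Finset.range d, (2*M)^r * (1/((m:ℝ)+1))^r :=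
          Fin.sum_univ_eq_sum_range (fun m => (2*M)^r * (1/((m:ℝ)+1))^r) d
      _ = (2*M)^r * ∑ m ∈ Finset.range d, (1/((m:ℝ)+1))^r := by
          rw [Finset.mul_sum]
      _ ≤ (2*M)^r * c := by
          apply mul_le_mul_of_nonneg_left (zeta_bound hq1 d)
          positivity
  have hr0 : r ≠ 0 := by linarith
  calc (∑ i, |z i| ^ r) ^ (1/r) ≤ ((2*M)^r * c) ^ (1/r) :=
        Real.rpow_le_rpow
          (Finset.sum_nonneg fun i _ => Real.rpow_nonneg (abs_nonneg _) _) hsum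
          (by positivity)
    _ = (2*M) * c ^ (1/r) := by
        rw [Real.mul_rpow (Real.rpow_nonneg (by positivity) _) (by linarith : (0:ℝ) ≤ c),
          one_div, Real.rpow_rpow_inv (by positivity) hr0]
    _ ≤ (2*M) * c := by
        apply mul_le_mul_of_nonneg_left _ (by positivity)
        calc c ^ (1/r) ≤ c ^ (1:ℝ) :=
              Real.rpow_le_rpow_of_exponent_le hc1
                (by rw [div_le_one (by linarith)]; linarith)
          _ = c := Real.rpow_one c
    _ = (2 * c) * M := by ring

lemma master_p {d k : ℕ} (hk1 : 1 ≤ k) (hkd : k ≤ d) {p q : ℝ≥0∞} (hp : 1 ≤ p)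
    (hq : 1 ≤ q) (hpt : p ≠ ∞) (x : Fin d → ℝ) :
    pnormE q ((SM k d).mulVec x) ≤ (2*(p.toReal + 1)) * pnormE p x := by
  set s := p.toReal with hsdef
  have hs1 : 1 ≤ s := one_le_toReal hp hpt
  set z := (SM k d).mulVec x with hzdef
  set M := pnormE p x with hMdef
  have hM0 : 0 ≤ M := pnormE_nonneg _ _
  have h1 : pnormE q z ≤ ∑ i, |z i| := pnormE_le_sum hq _
  have h2 : ∑ i, |z i| ≤ ∑ j : Fin d, (2/(((j:ℕ):ℝ)+1)) * |x j| := by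
    calc ∑ i, |z i| ≤ ∑ i : Fin d, ∑ j : Fin d, |SM k d i j| * |x j| := by
          apply Finset.sum_le_sum
          intro i _
          have hmv : z i = ∑ j, SM k d i j * x j := by
            simp [hzdef, Matrix.mulVec, dotProduct]
          rw [hmv]
          calc |∑ j, SM k d i j * x j| ≤ ∑ j, |SM k d i j * x j| :=
                Finset.abs_sum_le_sum_abs _ _
            _ = ∑ j, |SM k d i j| * |x j| :=
                Finset.sum_congr rfl fun j _ => abs_mul _ _
      _ = ∑ j : Fin d, (∑ i, |SM k d i j|) * |x j| := by
          rw [Finset.sum_comm]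
          exact Finset.sum_congr rfl fun j _ => (Finset.sum_mul _ _ _).symm
      _ ≤ ∑ j : Fin d, (2/(((j:ℕ):ℝ)+1)) * |x j| := by
          apply Finset.sum_le_sum
          intro j _
          exact mul_le_mul_of_nonneg_right (col_sum_le k d hk1 hkd j) (abs_nonneg _)
  have hpn : M = (∑ j, |x j| ^ s) ^ (1/s) := by rw [hMdef, pnormE, if_neg hpt]
  rcases eq_or_lt_of_le hs1 with hs | hs
  · -- s = 1
    have hMe : M = ∑ j, |x j| := by
      rw [hpn, ← hs]
      simp [Real.rpow_one]
    have h3 : ∑ j : Fin d, (2/(((j:ℕ):ℝ)+1)) * |x j| ≤ 2 * M := by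
      rw [hMe, Finset.mul_sum]
      apply Finset.sum_le_sum
      intro j _
      apply mul_le_mul_of_nonneg_right _ (abs_nonneg _)
      exact div_le_self (by norm_num) (le_add_of_nonneg_left (Nat.cast_nonneg _))
    have : (2:ℝ) * M ≤ (2*(s+1)) * M := by nlinarith
    linarith
  · -- 1 < s
    set s' := s/(s-1) with hs'def
    have hpq : Real.HolderConjugate s' s := (Real.HolderConjugate.conjExponent hs).symm
    have hs'1 : 1 < s' := hpq.lt
    have hH := Real.inner_le_Lp_mul_Lq_of_nonneg Finset.univ hpq
      (f := fun j : Fin d => 2/(((j:ℕ):ℝ)+1)) (g := fun j : Fin d => |x j|)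
      (fun j _ => by positivity) (fun j _ => abs_nonneg _)
    have hcc : s'/(s'-1) = s := hpq.conjugate_eq.symm

    have hzeta : ∑ j : Fin d, (2/(((j:ℕ):ℝ)+1)) ^ s' ≤ 2^s' * s := by
      calc ∑ j : Fin d, (2/(((j:ℕ):ℝ)+1)) ^ s'
          = ∑ m ∈ Finset.range d, (2/((m:ℝ)+1)) ^ s' :=
            Fin.sum_univ_eq_sum_range (fun m => (2/((m:ℝ)+1)) ^ s') d
        _ = ∑ m ∈ Finset.range d, 2^s' * (1/((m:ℝ)+1)) ^ s' := by
            apply Finset.sum_congr rfl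
            intro m _
            rw [show (2:ℝ)/((m:ℝ)+1) = 2 * (1/((m:ℝ)+1)) by ring]
            exact Real.mul_rpow (by norm_num) (by positivity)
        _ = 2^s' * ∑ m ∈ Finset.range d, (1/((m:ℝ)+1)) ^ s' := by rw [Finset.mul_sum]
        _ ≤ 2^s' * (s'/(s'-1)) := by
            apply mul_le_mul_of_nonneg_left (zeta_bound hs'1 d) (by positivity)
        _ = 2^s' * s := by rw [hcc]
    have hs'0 : s' ≠ 0 := by linarith
    have hfac : (∑ j : Fin d, (2/(((j:ℕ):ℝ)+1)) ^ s') ^ (1/s') ≤ 2 * s := by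
      calc (∑ j : Fin d, (2/(((j:ℕ):ℝ)+1)) ^ s') ^ (1/s')
          ≤ (2^s' * s) ^ (1/s') :=
            Real.rpow_le_rpow (Finset.sum_nonneg fun j _ => Real.rpow_nonneg (by positivity) _)
              hzeta (by positivity)
        _ = 2 * s ^ (1/s') := by
            rw [Real.mul_rpow (Real.rpow_nonneg (by norm_num) _) (by linarith : (0:ℝ) ≤ s),
              one_div, Real.rpow_rpow_inv (by norm_num) hs'0]
        _ ≤ 2 * s := by
            apply mul_le_mul_of_nonneg_left _ (by norm_num)
            calc s ^ (1/s') ≤ s ^ (1:ℝ) :=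
                  Real.rpow_le_rpow_of_exponent_le (by linarith)
                    (by rw [div_le_one (by linarith)]; linarith)
              _ = s := Real.rpow_one s
    -- Hölder: T ≤ (Σ f^{s'})^{1/s'} * (Σ |x|^s)^{1/s}
    have habs : ∀ j : Fin d, |2/(((j:ℕ):ℝ)+1)| = 2/(((j:ℕ):ℝ)+1) := fun j =>
      abs_of_pos (by positivity)
    have hT : ∑ j : Fin d, (2/(((j:ℕ):ℝ)+1)) * |x j| ≤ (2*s) * M := by
      have hMnn : (0:ℝ) ≤ (∑ j, |x j| ^ s) ^ (1/s) := Real.rpow_nonneg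
        (Finset.sum_nonneg fun j _ => Real.rpow_nonneg (abs_nonneg _) _) _
      calc ∑ j : Fin d, (2/(((j:ℕ):ℝ)+1)) * |x j|
          ≤ (∑ j : Fin d, (2/(((j:ℕ):ℝ)+1)) ^ s') ^ (1/s') * (∑ j, |x j| ^ s) ^ (1/s) := hH
        _ ≤ (2*s) * (∑ j, |x j| ^ s) ^ (1/s) :=
            mul_le_mul_of_nonneg_right hfac hMnn
        _ = (2*s) * M := by rw [← hpn]
    have hfin : (2*s) * M ≤ (2*(s+1)) * M := by nlinarith
    linarith


/-- `‖SM_{(k,d)}‖_{p,q} ≤ 2·min{p + 1, q/(q−1), 1 + log k}` for all `p, q ∈ [1, ∞]`. -/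
theorem SM_subNorm_bound (d k : ℕ) (hk1 : 1 ≤ k) (hkd : k ≤ d)
    (p q : ℝ≥0∞) (hp : 1 ≤ p) (hq : 1 ≤ q) :
    subNormE p q (SM k d) ≤
      2 * (min (min (p + 1) (qConj q)) (ENNReal.ofReal (1 + Real.log k))).toReal := by
  have hlogk : (0:ℝ) ≤ Real.log k := Real.log_nonneg (by exact_mod_cast hk1)
  have hL0 : (0:ℝ) ≤ 1 + Real.log k := by linarith
  have hLne : ENNReal.ofReal (1 + Real.log k) ≠ ∞ := ENNReal.ofReal_ne_top
  rcases le_total (min (p+1) (qConj q)) (ENNReal.ofReal (1 + Real.log k)) with h | h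
  · rw [min_eq_left h]
    rcases le_total (p+1) (qConj q) with h2 | h2
    · rw [min_eq_left h2]
      rw [min_eq_left h2] at h
      have hpne : p ≠ ∞ := by
        intro hp'
        exact hLne (top_le_iff.mp (by simpa [hp'] using h))
      have htR : (p+1).toReal = p.toReal + 1 := by
        rw [ENNReal.toReal_add hpne (by norm_num), ENNReal.toReal_one]
      rw [htR]
      have hs1 : 1 ≤ p.toReal := one_le_toReal hp hpne
      exact subNormE_le hp (by positivity) (master_p hk1 hkd hp hq hpne)
    · rw [min_eq_right h2]
      rw [min_eq_right h2] at h
      have hqCne : qConj q ≠ ∞ := fun hc => hLne (top_le_iff.mp (hc ▸ h))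
      by_cases hqt : q = ∞
      · subst hqt
        have : qConj ∞ = 1 := by rw [qConj, if_pos rfl]
        rw [this, ENNReal.toReal_one, mul_one]
        exact subNormE_le hp (by norm_num) (fun x => master_qtop hk1 hkd hp x)
      · have hq1' : q ≠ 1 := by
          intro h1
          apply hqCne
          rw [h1, qConj, if_neg (by norm_num), tsub_self]
          exact ENNReal.div_zero one_ne_zero
        have hqlt : 1 < q := lt_of_le_of_ne hq (Ne.symm hq1')
        have hq1 : 1 < q.toReal := by
          rw [← ENNReal.toReal_one]
          exact (ENNReal.toReal_lt_toReal (by norm_num) hqt).mpr hqlt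
        have htR : (qConj q).toReal = q.toReal / (q.toReal - 1) := by
          rw [qConj, if_neg hqt, ENNReal.toReal_div,
            ENNReal.toReal_sub_of_le hq hqt, ENNReal.toReal_one]
        rw [htR]
        have hCnn : (0:ℝ) ≤ 2 * (q.toReal / (q.toReal - 1)) := by
          have : (0:ℝ) ≤ q.toReal / (q.toReal - 1) :=
            div_nonneg (by linarith) (by linarith)
          linarith
        exact subNormE_le hp hCnn (master_q hk1 hkd hp hqt hq1)
  · rw [min_eq_right h, ENNReal.toReal_ofReal hL0]
    exact subNormE_le hp (by linarith) (master_log hk1 hkd hp hq)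
end
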